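/- Let Z be an abelian group, let A, B be finite subsets of Z, and let G ⊆ A × B such that the map (a,b) ↦ a − b is injective on G. Define V = {(a,b,b') : (a,b), (a,b') ∈ G} and let S be the set of quadruples (v_0, v_1, v_2, v_3) ∈ V^4, with v_i = (a_i, b_i, b'_i), satisfying a_0 + b_0 = a_1 + b_1, a_0 + b'_0 = a_1 + b'_1, b_1 = b_2, b'_1 = b'_2, a_2 + b_2 = a_3 + b_3, and b'_2 = b'_3. Then #S ≤ #V · #A · #B. -/

import Mathlib

private lemma katz_tao_aux {Z : Type*} [AddCommGroup Z]
    {a0 b0 b0' a1 b1 b1' a2 b2 b2' a3 b3 b3' : Z}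
    (e1 : a0 + b0 = a1 + b1) (e2 : a0 + b0' = a1 + b1') (e3 : b1 = b2) (e4 : b1' = b2')
    (e5 : a2 + b2 = a3 + b3) (e6 : b2' = b3') :
    a3 - b3' = a2 - b3 + (b0 - b0') := by
  have ha3 : a3 = a2 + b2 - b3 := eq_sub_of_add_eq e5.symm
  have h : b1 - b1' = b0 - b0' := by
    have h2 : (a1 + b1) - (a1 + b1') = b1 - b1' := by abel
    rw [← e1, ← e2] at h2
    rw [← h2]; abel
  rw [← e6, ← e4, ha3, ← e3, ← h]
  abel

/-- **Katz–Tao, the bound `#S ≤ N² #V` (with `N²` replaced by `#A · #B`).**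
Let `Z` be an abelian group, `A, B` finite subsets of `Z`, and `G ⊆ A × B` such that
`(a,b) ↦ a - b` is injective on `G`.  Let `V = {(a,b,b') : (a,b), (a,b') ∈ G}` and `S`
the set of quadruples `(v₀,v₁,v₂,v₃) ∈ V⁴`, `vᵢ = (aᵢ,bᵢ,b'ᵢ)`, with
`a₀+b₀ = a₁+b₁`, `a₀+b'₀ = a₁+b'₁`, `b₁ = b₂`, `b'₁ = b'₂`, `a₂+b₂ = a₃+b₃`,
`b'₂ = b'₃`.  Then `#S ≤ #V · #A · #B`. -/
theorem S_card_upper_bound {Z : Type*} [AddCommGroup Z] [DecidableEq Z]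
    (A B : Finset Z) (G : Finset (Z × Z)) (hG : G ⊆ A ×ˢ B)
    (hinj : ∀ p ∈ G, ∀ q ∈ G, p.1 - p.2 = q.1 - q.2 → p = q)
    (V : Finset (Z × Z × Z))
    (hV : V = (A ×ˢ B ×ˢ B).filter (fun v => (v.1, v.2.1) ∈ G ∧ (v.1, v.2.2) ∈ G))
    (S : Finset ((Z × Z × Z) × (Z × Z × Z) × (Z × Z × Z) × (Z × Z × Z)))
    (hS : S = (V ×ˢ V ×ˢ V ×ˢ V).filter (fun q =>
      q.1.1 + q.1.2.1 = q.2.1.1 + q.2.1.2.1 ∧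
      q.1.1 + q.1.2.2 = q.2.1.1 + q.2.1.2.2 ∧
      q.2.1.2.1 = q.2.2.1.2.1 ∧
      q.2.1.2.2 = q.2.2.1.2.2 ∧
      q.2.2.1.1 + q.2.2.1.2.1 = q.2.2.2.1 + q.2.2.2.2.1 ∧
      q.2.2.1.2.2 = q.2.2.2.2.2)) :
    S.card ≤ V.card * A.card * B.card := by
  classical
  have key : S.card ≤ (V ×ˢ A ×ˢ B).card := by
    apply Finset.card_le_card_of_injOn (fun s => (s.1, s.2.2.1.1, s.2.2.2.2.1))
    · intro s hs
      rw [Finset.mem_coe, hS, Finset.mem_filter] at hs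
      obtain ⟨hmem, -⟩ := hs
      simp only [Finset.mem_product] at hmem
      obtain ⟨h0, h1, h2, h3⟩ := hmem
      simp only [hV, Finset.mem_filter, Finset.mem_product] at h2 h3
      simp only [Finset.mem_coe, Finset.mem_product]
      exact ⟨h0, h2.1.1, h3.1.2.1⟩
    · rintro ⟨⟨a0, b0, b0'⟩, ⟨a1, b1, b1'⟩, ⟨a2, b2, b2'⟩, ⟨a3, b3, b3'⟩⟩ hs
        ⟨⟨c0, d0, d0'⟩, ⟨c1, d1, d1'⟩, ⟨c2, d2, d2'⟩, ⟨c3, d3, d3'⟩⟩ ht hst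
      simp only [Finset.mem_coe, hS, Finset.mem_filter, Finset.mem_product] at hs ht
      obtain ⟨⟨-, -, -, hx⟩, e1, e2, e3, e4, e5, e6⟩ := hs
      obtain ⟨⟨-, -, -, hy⟩, f1, f2, f3, f4, f5, f6⟩ := ht
      simp only [hV, Finset.mem_filter] at hx hy
      obtain ⟨-, -, hg⟩ := hx
      obtain ⟨-, -, hg'⟩ := hy
      simp only [Prod.mk.injEq] at hst
      obtain ⟨⟨ha0, hb0, hb0'⟩, ha2, hb3⟩ := hst
      have hd : a3 - b3' = c3 - d3' := by
        rw [katz_tao_aux e1 e2 e3 e4 e5 e6, katz_tao_aux f1 f2 f3 f4 f5 f6,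
          ha2, hb3, hb0, hb0']
      have hpq := hinj (a3, b3') hg (c3, d3') hg' hd
      obtain ⟨ha3, hb3'⟩ := Prod.ext_iff.mp hpq
      simp only at ha3 hb3'
      have hb2' : b2' = d2' := e6.trans (hb3'.trans f6.symm)
      have hb2 : b2 = d2 := by
        have hs2 : b2 = a3 + b3 - a2 := eq_sub_of_add_eq (by rw [add_comm]; exact e5)
        have ht2 : d2 = c3 + d3 - c2 := eq_sub_of_add_eq (by rw [add_comm]; exact f5)
        rw [hs2, ht2, ha3, hb3, ha2]
      have hb1 : b1 = d1 := e3.trans (hb2.trans f3.symm)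
      have hb1' : b1' = d1' := e4.trans (hb2'.trans f4.symm)
      have ha1 : a1 = c1 := by
        have hs1 : a1 = a0 + b0 - b1 := eq_sub_of_add_eq e1.symm
        have ht1 : c1 = c0 + d0 - d1 := eq_sub_of_add_eq f1.symm
        rw [hs1, ht1, ha0, hb0, hb1]
      subst ha0 hb0 hb0' ha1 hb1 hb1' ha2 hb2 hb2' ha3 hb3 hb3'
      rfl
  rw [Finset.card_product, Finset.card_product, ← mul_assoc] at key
  exact key
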